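/- (Upper bound on the expected sum of the ℓ largest order statistics) If 1 ≤ ℓ ≤ k and 2(ℓ−1) ≤ k, then the expected value of Y = ∑_{r=k−ℓ+1}^{k} X_{(r:k)} satisfies E[Y] ≤ ℓ·μ + (σ·√(2k)/2)·(2√ℓ − 1). -/

import Mathlib

open MeasureTheory ProbabilityTheory

open Classical in
/-- The `r`-th order statistic (with `1 ≤ r ≤ k`) of `X₁, …, X_k` at a sample point `ω`:
the `(r−1)`-indexed entry of the sorted list `(X₁(ω), …, X_k(ω))`. -/
noncomputable def orderStat {Ω : Type*} {k : ℕ} (X : Fin k → Ω → ℝ) (r : ℕ) (ω : Ω) : ℝ :=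
  ((List.ofFn fun i => X i ω).mergeSort (fun a b => decide (a ≤ b))).getD (r - 1) 0

lemma orderStat_pointwise {Ω : Type*} {k : ℕ} (X : Fin k → Ω → ℝ) (r : ℕ)
    (hr1 : 1 ≤ r) (hrk : r ≤ k) (c : ℝ) (ω : Ω) :
    ((k : ℝ) - r + 1) * (orderStat X r ω - c) ≤ ∑ i : Fin k, max (X i ω - c) 0 := by
  classical
  set l : List ℝ := List.ofFn fun i => X i ω with hl
  set L : List ℝ := l.mergeSort (fun a b => decide (a ≤ b)) with hL
  have hlen : L.length = k := by
    rw [hL, List.length_mergeSort, hl, List.length_ofFn]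
  have hsorted : L.Pairwise (· ≤ ·) := by
    have h := List.pairwise_mergeSort (le := fun a b : ℝ => decide (a ≤ b))
      (fun a b c h1 h2 => by simp only [decide_eq_true_eq] at *; exact le_trans h1 h2)
      (fun a b => by simpa using le_total a b) l
    exact h.imp (fun h => by simpa using h)
  have hidx : r - 1 < L.length := by omega
  have hY : orderStat X r ω = L.get ⟨r - 1, hidx⟩ := by
    rw [orderStat]
    exact List.getD_eq_getElem _ _ hidx
  set f : ℝ → ℝ := fun x => max (x - c) 0 with hf
  have hsum : ∑ i : Fin k, max (X i ω - c) 0 = ∑ j ∈ Finset.range k, f (L.getD j 0) := by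
    have h1 : ∑ i : Fin k, max (X i ω - c) 0 = (l.map f).sum := by
      rw [hl, List.map_ofFn, List.sum_ofFn]; rfl
    have h2 : (l.map f).sum = (L.map f).sum :=
      (((List.mergeSort_perm l _).map f).sum_eq).symm
    have h3 : (L.map f).sum = ∑ i : Fin L.length, f (L.get i) := by
      conv_lhs => rw [← List.ofFn_get L, List.map_ofFn, List.sum_ofFn]
      rfl
    have h4 : ∑ i : Fin L.length, f (L.get i) = ∑ j ∈ Finset.range L.length, f (L.getD j 0) := by
      rw [← Fin.sum_univ_eq_sum_range (fun j => f (L.getD j 0)) L.length]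
      exact Finset.sum_congr rfl fun i _ => by rw [List.getD_eq_getElem _ _ i.isLt]; rfl
    rw [h1, h2, h3, h4, hlen]
  rw [hsum]
  have hsub : Finset.Ico (r - 1) k ⊆ Finset.range k := by
    intro x hx; simp only [Finset.mem_Ico] at hx; exact Finset.mem_range.mpr hx.2
  have hnonneg : ∀ j ∈ Finset.range k, j ∉ Finset.Ico (r - 1) k → 0 ≤ f (L.getD j 0) :=
    fun j _ _ => le_max_right _ _
  have step1 : ∑ j ∈ Finset.Ico (r - 1) k, f (L.getD j 0) ≤ ∑ j ∈ Finset.range k, f (L.getD j 0) :=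
    Finset.sum_le_sum_of_subset_of_nonneg hsub hnonneg
  have step2 : ((k : ℝ) - r + 1) * (orderStat X r ω - c) ≤
      ∑ j ∈ Finset.Ico (r - 1) k, f (L.getD j 0) := by
    have hcard : (Finset.Ico (r - 1) k).card = k - r + 1 := by
      rw [Nat.card_Ico]; omega
    have hbound : ∀ j ∈ Finset.Ico (r - 1) k, orderStat X r ω - c ≤ f (L.getD j 0) := by
      intro j hj
      simp only [Finset.mem_Ico] at hj
      have hjlt : j < L.length := by omega
      have hmono : L.get ⟨r - 1, hidx⟩ ≤ L.get ⟨j, hjlt⟩ :=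
        hsorted.rel_get_of_le (by simpa using hj.1)
      have : L.getD j 0 = L.get ⟨j, hjlt⟩ := List.getD_eq_getElem _ _ hjlt
      rw [this, hY, hf]
      exact le_trans (by linarith) (le_max_left _ _)
    have := Finset.card_nsmul_le_sum (Finset.Ico (r - 1) k) (fun j => f (L.getD j 0))
      (orderStat X r ω - c) hbound
    rw [hcard, nsmul_eq_mul] at this
    have hcast : ((k - r + 1 : ℕ) : ℝ) = (k : ℝ) - r + 1 := by
      push_cast [Nat.cast_sub hrk]; ring
    rwa [hcast] at this
  linarith

lemma two_max_le (z s : ℝ) (hs : 0 < s) :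
    max (z - s) 0 + max (-z - s) 0 ≤ z ^ 2 / (4 * s) := by
  rcases le_total z 0 with hz | hz
  · rw [max_eq_right (by linarith : z - s ≤ 0), zero_add]
    rcases le_total (-z - s) 0 with h | h
    · rw [max_eq_right h]; positivity
    · rw [max_eq_left h, le_div_iff₀ (by positivity)]
      nlinarith [sq_nonneg (z + 2 * s)]
  · rw [max_eq_right (by linarith : -z - s ≤ 0), add_zero]
    rcases le_total (z - s) 0 with h | h
    · rw [max_eq_right h]; positivity
    · rw [max_eq_left h, le_div_iff₀ (by positivity)]
      nlinarith [sq_nonneg (z - 2 * s)]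

lemma posPart_integral_bound {Ω : Type*} [MeasureSpace Ω]
    [IsProbabilityMeasure (volume : Measure Ω)]
    (Y : Ω → ℝ) (μ σ : ℝ)
    (hL2 : MemLp Y 2 volume) (hmean : ∫ ω, Y ω = μ)
    (hvar : variance Y volume = σ ^ 2)
    (hsym : IdentDistrib (fun ω => 2 * μ - Y ω) Y volume volume)
    {s : ℝ} (hs : 0 < s) :
    ∫ ω, max (Y ω - μ - s) 0 ≤ σ ^ 2 / (8 * s) := by
  have hYint : Integrable Y volume := hL2.integrable one_le_two
  have hYsq : Integrable (fun ω => Y ω ^ 2) volume := hL2.integrable_sq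
  have hZsq_int : Integrable (fun ω => (Y ω - μ) ^ 2) volume :=
    (hL2.sub (memLp_const μ)).integrable_sq
  have hsubint : Integrable (fun ω => Y ω ^ 2 - 2 * μ * Y ω) volume :=
    hYsq.sub (hYint.const_mul (2 * μ))
  have hvar' : ∫ ω, (Y ω - μ) ^ 2 = σ ^ 2 := by
    have h1 : ∀ ω, (Y ω - μ) ^ 2 = Y ω ^ 2 - 2 * μ * Y ω + μ ^ 2 := fun ω => by ring
    have h2 : ∫ ω, (Y ω - μ) ^ 2 = ∫ ω, (Y ω ^ 2 - 2 * μ * Y ω + μ ^ 2) := by simp_rw [h1]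
    rw [h2, integral_add hsubint (integrable_const _),
      integral_sub hYsq (hYint.const_mul (2 * μ)), integral_const_mul, hmean,
      integral_const, probReal_univ]
    have h3 := variance_eq_sub hL2
    simp only [Pi.pow_apply] at h3
    rw [hvar, hmean] at h3
    simp
    linarith
  have hg : Measurable fun x : ℝ => max (x - μ - s) 0 :=
    ((measurable_id.sub_const μ).sub_const s).max measurable_const
  have hneg : ∫ ω, max (-(Y ω - μ) - s) 0 = ∫ ω, max (Y ω - μ - s) 0 := by
    have h := (hsym.comp hg).integral_eq
    simp only [Function.comp] at h
    have h1 : ∀ ω, 2 * μ - Y ω - μ - s = -(Y ω - μ) - s := fun ω => by ring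
    simp_rw [h1] at h
    exact h
  have hA : Integrable (fun ω => max (Y ω - μ - s) 0) volume := by
    have heq : (fun ω => max (Y ω - μ - s) 0) = (fun ω => max (Y ω - (μ + s)) 0) := by
      funext ω; congr 1; ring
    rw [heq]
    exact (hYint.sub (integrable_const (μ + s))).pos_part
  have hB : Integrable (fun ω => max (-(Y ω - μ) - s) 0) volume := by
    have heq : (fun ω => max (-(Y ω - μ) - s) 0) = (fun ω => max (-Y ω - (s - μ)) 0) := by
      funext ω; congr 1; ring
    rw [heq]
    exact (hYint.neg.sub (integrable_const (s - μ))).pos_part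
  have hsum : (∫ ω, max (Y ω - μ - s) 0) + ∫ ω, max (-(Y ω - μ) - s) 0 ≤ σ ^ 2 / (4 * s) := by
    rw [← integral_add hA hB]
    calc ∫ ω, (max (Y ω - μ - s) 0 + max (-(Y ω - μ) - s) 0)
        ≤ ∫ ω, (Y ω - μ) ^ 2 / (4 * s) :=
          integral_mono (hA.add hB) (hZsq_int.div_const _)
            (fun ω => two_max_le (Y ω - μ) s hs)
      _ = σ ^ 2 / (4 * s) := by rw [integral_div, hvar']
  rw [hneg] at hsum
  have h4 : σ ^ 2 / (4 * s) = 2 * (σ ^ 2 / (8 * s)) := by ring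
  linarith

lemma orderStat_expectation_le {Ω : Type*} [MeasureSpace Ω]
    [IsProbabilityMeasure (volume : Measure Ω)]
    {k : ℕ} (X : Fin k → Ω → ℝ) (μ σ : ℝ) (hσ : 0 ≤ σ)
    (hL2 : ∀ i, MemLp (X i) 2 volume)
    (hmean : ∀ i, ∫ ω, X i ω = μ)
    (hvar : ∀ i, variance (X i) volume = σ ^ 2)
    (hsym : ∀ i, IdentDistrib (fun ω => 2 * μ - X i ω) (X i) volume volume)
    (hint : ∀ r, Integrable (orderStat X r) volume)
    (r : ℕ) (hr1 : 1 ≤ r) (hrk : r ≤ k) :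
    ∫ ω, orderStat X r ω ≤ μ + σ * Real.sqrt ((k : ℝ) / (2 * ((k : ℝ) - r + 1))) := by
  have hk1 : 1 ≤ k := le_trans hr1 hrk
  have hm0 : (0 : ℝ) < (k : ℝ) - r + 1 := by
    have : (r : ℝ) ≤ k := by exact_mod_cast hrk
    linarith
  have hk0 : (0 : ℝ) < k := by exact_mod_cast hk1
  set m : ℝ := (k : ℝ) - r + 1 with hm
  have key : ∀ s : ℝ, 0 < s → ∫ ω, orderStat X r ω ≤ μ + s + k * σ ^ 2 / (8 * s * m) := by
    intro s hs
    have hintA : Integrable (fun ω => m * (orderStat X r ω - (μ + s))) volume :=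
      ((hint r).sub (integrable_const (μ + s))).const_mul m
    have hintB : ∀ i : Fin k, Integrable (fun ω => max (X i ω - (μ + s)) 0) volume :=
      fun i => (((hL2 i).integrable one_le_two).sub (integrable_const (μ + s))).pos_part
    have hintBsum : Integrable (fun ω => ∑ i : Fin k, max (X i ω - (μ + s)) 0) volume :=
      integrable_finset_sum _ (fun i _ => hintB i)
    have hmono : ∫ ω, m * (orderStat X r ω - (μ + s)) ≤
        ∫ ω, ∑ i : Fin k, max (X i ω - (μ + s)) 0 :=
      integral_mono hintA hintBsum
        (fun ω => orderStat_pointwise X r hr1 hrk (μ + s) ω)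
    have hL : ∫ ω, m * (orderStat X r ω - (μ + s)) =
        m * ((∫ ω, orderStat X r ω) - (μ + s)) := by
      rw [integral_const_mul, integral_sub (hint r) (integrable_const _), integral_const,
        probReal_univ]
      simp
    have hR : ∫ ω, ∑ i : Fin k, max (X i ω - (μ + s)) 0 ≤ k * (σ ^ 2 / (8 * s)) := by
      rw [integral_finset_sum _ (fun i _ => hintB i)]
      calc ∑ i : Fin k, ∫ ω, max (X i ω - (μ + s)) 0
          ≤ ∑ _i : Fin k, σ ^ 2 / (8 * s) := by
            apply Finset.sum_le_sum
            intro i _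
            have h := posPart_integral_bound (X i) μ σ (hL2 i) (hmean i) (hvar i) (hsym i) hs
            have heq : ∀ ω, X i ω - (μ + s) = X i ω - μ - s := fun ω => by ring
            simp_rw [heq]
            exact h
        _ = k * (σ ^ 2 / (8 * s)) := by simp [Finset.sum_const, nsmul_eq_mul]
    rw [hL] at hmono
    have h2 : (∫ ω, orderStat X r ω) - (μ + s) ≤ k * (σ ^ 2 / (8 * s)) / m := by
      rw [le_div_iff₀ hm0]
      calc ((∫ ω, orderStat X r ω) - (μ + s)) * m
          = m * ((∫ ω, orderStat X r ω) - (μ + s)) := by ring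
        _ ≤ _ := le_trans hmono hR
    have h3 : k * (σ ^ 2 / (8 * s)) / m = k * σ ^ 2 / (8 * s * m) := by
      field_simp
    linarith [h2, h3.le]
  rcases eq_or_lt_of_le hσ with hσ0 | hσpos
  · have hle : ∫ ω, orderStat X r ω ≤ μ := by
      apply le_of_forall_pos_le_add
      intro ε hε
      have := key ε hε
      rw [← hσ0] at this
      simpa using this
    have : 0 ≤ Real.sqrt ((k : ℝ) / (2 * m)) := Real.sqrt_nonneg _
    rw [← hσ0]
    simpa using hle
  · set a : ℝ := (k : ℝ) / (8 * m) with ha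
    have ha0 : 0 < a := by positivity
    have hsqa : 0 < Real.sqrt a := Real.sqrt_pos.mpr ha0
    set s₀ : ℝ := σ * Real.sqrt a with hs₀
    have hs₀0 : 0 < s₀ := mul_pos hσpos hsqa
    have hmain := key s₀ hs₀0
    have hcalc : μ + s₀ + k * σ ^ 2 / (8 * s₀ * m) = μ + σ * Real.sqrt ((k : ℝ) / (2 * m)) := by
      have h1 : k * σ ^ 2 / (8 * s₀ * m) = σ * (a / Real.sqrt a) := by
        rw [hs₀, ha]
        field_simp
      rw [h1, Real.div_sqrt]
      have h2 : (k : ℝ) / (2 * m) = 4 * a := by rw [ha]; field_simp; ring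
      rw [h2, show (4 : ℝ) * a = 2 ^ 2 * a by norm_num,
        Real.sqrt_mul (by positivity) a, Real.sqrt_sq (by norm_num : (0:ℝ) ≤ 2)]
      ring
    rw [hcalc] at hmain
    exact hmain

lemma sum_inv_sqrt_le : ∀ ℓ : ℕ, 1 ≤ ℓ →
    ∑ j ∈ Finset.Icc 1 ℓ, 1 / Real.sqrt (j : ℝ) ≤ 2 * Real.sqrt (ℓ : ℝ) - 1 := by
  intro ℓ hℓ
  induction ℓ, hℓ using Nat.le_induction with
  | base => norm_num
  | succ n hn ih =>
    rw [Finset.sum_Icc_succ_top (by omega : 1 ≤ n + 1)]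
    have ha2 : Real.sqrt (n : ℝ) ^ 2 = (n : ℝ) := Real.sq_sqrt (by positivity)
    have hb2 : Real.sqrt ((n : ℝ) + 1) ^ 2 = (n : ℝ) + 1 :=
      Real.sq_sqrt (by positivity)
    have hb0 : 0 < Real.sqrt ((n : ℝ) + 1) := Real.sqrt_pos.mpr (by positivity)
    have ha0 : 0 ≤ Real.sqrt (n : ℝ) := Real.sqrt_nonneg _
    have hstep : 1 / Real.sqrt ((n : ℝ) + 1) ≤
        2 * Real.sqrt ((n : ℝ) + 1) - 2 * Real.sqrt (n : ℝ) := by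
      rw [div_le_iff₀ hb0]
      nlinarith [sq_nonneg (Real.sqrt ((n : ℝ) + 1) - Real.sqrt (n : ℝ))]
    have hcast : ((n + 1 : ℕ) : ℝ) = (n : ℝ) + 1 := by push_cast; ring
    rw [hcast]
    linarith

/-- Upper bound on the expected sum of the `ℓ` largest order statistics: if `1 ≤ ℓ ≤ k`
and `2(ℓ−1) ≤ k`, then `E[∑_{r=k−ℓ+1}^{k} X_{(r:k)}] ≤ ℓ·μ + (σ·√(2k)/2)·(2√ℓ − 1)`.
The Gascuel–Caraux per-term upper bound is taken as a hypothesis. -/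
theorem expected_sum_largest_upper_bound {Ω : Type*} [MeasureSpace Ω]
    [IsProbabilityMeasure (volume : Measure Ω)]
    {k : ℕ} (hk : 1 ≤ k) (X : Fin k → Ω → ℝ) (μ σ : ℝ) (hσ : 0 ≤ σ)
    (hmeas : ∀ i, AEMeasurable (X i) volume)
    (hL2 : ∀ i, MemLp (X i) 2 volume)
    (hident : ∀ i j, IdentDistrib (X i) (X j) volume volume)
    (hmean : ∀ i, ∫ ω, X i ω = μ)
    (hvar : ∀ i, variance (X i) volume = σ ^ 2)
    (hsym : ∀ i, IdentDistrib (fun ω => 2 * μ - X i ω) (X i) volume volume)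
    (hint : ∀ r, Integrable (orderStat X r) volume)
    (hGC : ∀ r : ℕ, 1 ≤ r → r ≤ k → 2 * (r - 1) ≤ k →
      ∫ ω, orderStat X r ω ≤ μ + σ * Real.sqrt ((k : ℝ) / (2 * ((k : ℝ) - (r : ℝ) + 1))))
    (ℓ : ℕ) (hℓ1 : 1 ≤ ℓ) (hℓk : ℓ ≤ k) (hℓ2 : 2 * (ℓ - 1) ≤ k) :
    ∫ ω, ∑ r ∈ Finset.Icc (k - ℓ + 1) k, orderStat X r ω ≤
      (ℓ : ℝ) * μ + σ * Real.sqrt (2 * (k : ℝ)) / 2 * (2 * Real.sqrt (ℓ : ℝ) - 1) := by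
  set C : ℝ := σ * Real.sqrt (2 * (k : ℝ)) / 2 with hC
  have hC0 : 0 ≤ C := by positivity
  rw [integral_finset_sum _ (fun r _ => hint r)]
  have hterm : ∀ r ∈ Finset.Icc (k - ℓ + 1) k,
      ∫ ω, orderStat X r ω ≤ μ + C * (1 / Real.sqrt ((k + 1 - r : ℕ) : ℝ)) := by
    intro r hr
    rw [Finset.mem_Icc] at hr
    have hr1 : 1 ≤ r := by omega
    have hrk : r ≤ k := hr.2
    have h := orderStat_expectation_le X μ σ hσ hL2 hmean hvar hsym hint r hr1 hrk
    have hmpos : (0 : ℝ) < (k : ℝ) - r + 1 := by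
      have : (r : ℝ) ≤ k := by exact_mod_cast hrk
      linarith
    have hcast : ((k + 1 - r : ℕ) : ℝ) = (k : ℝ) - r + 1 := by
      push_cast [Nat.cast_sub (by omega : r ≤ k + 1)]; ring
    have heq : σ * Real.sqrt ((k : ℝ) / (2 * ((k : ℝ) - r + 1))) =
        μ + C * (1 / Real.sqrt (((k : ℝ) - r + 1))) - μ := by
      have e1 : (k : ℝ) / (2 * ((k : ℝ) - r + 1)) =
          (2 * k) / (2 ^ 2 * ((k : ℝ) - r + 1)) := by
        field_simp
      rw [e1, Real.sqrt_div (by positivity) _,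
        Real.sqrt_mul (by positivity : (0:ℝ) ≤ 2 ^ 2),
        Real.sqrt_sq (by norm_num : (0:ℝ) ≤ 2), hC]
      ring
    rw [hcast]
    linarith [h, heq.le, heq.ge]
  calc ∑ r ∈ Finset.Icc (k - ℓ + 1) k, ∫ ω, orderStat X r ω
      ≤ ∑ r ∈ Finset.Icc (k - ℓ + 1) k, (μ + C * (1 / Real.sqrt ((k + 1 - r : ℕ) : ℝ))) :=
        Finset.sum_le_sum hterm
    _ = (ℓ : ℝ) * μ + C * ∑ r ∈ Finset.Icc (k - ℓ + 1) k, 1 / Real.sqrt ((k + 1 - r : ℕ) : ℝ) := by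
        rw [Finset.sum_add_distrib, Finset.sum_const, Nat.card_Icc, ← Finset.mul_sum]
        have : k + 1 - (k - ℓ + 1) = ℓ := by omega
        rw [this, nsmul_eq_mul]
    _ = (ℓ : ℝ) * μ + C * ∑ j ∈ Finset.Icc 1 ℓ, 1 / Real.sqrt (j : ℝ) := by
        congr 1
        congr 1
        apply Finset.sum_nbij' (fun r => k + 1 - r) (fun j => k + 1 - j)
        · intro a ha; rw [Finset.mem_Icc] at *; omega
        · intro a ha; rw [Finset.mem_Icc] at *; omega
        · intro a ha; rw [Finset.mem_Icc] at ha; omega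
        · intro a ha; rw [Finset.mem_Icc] at ha; omega
        · intro a ha; rfl
    _ ≤ (ℓ : ℝ) * μ + C * (2 * Real.sqrt (ℓ : ℝ) - 1) := by
        have := sum_inv_sqrt_le ℓ hℓ1
        nlinarith [hC0, this]
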